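/- There exist a model class M = {μ, ν} over binary alphabet and prior weights (w, 1−w) such that, with μ-probability at least δ, the cumulative KL error satisfies D_∞ > (1/(4 ln 2))·ln(1/δ)·(ln(1/δ) + 2·ln((1−w)/w) − 3·ln 2). -/

import Mathlib

open MeasureTheory ENNReal

/-- The cylinder set of a finite string `x`: infinite sequences beginning with `x`. -/
def cyl {A : Type*} (x : List A) : Set (ℕ → A) :=
  {ω | ∀ i : Fin x.length, ω i = x.get i}

/-- `mass μ x` is the `μ`-probability of the cylinder set of `x`. -/
noncomputable def mass {A : Type*} [MeasurableSpace A] (μ : Measure (ℕ → A)) (x : List A) : ℝ :=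
  (μ (cyl x)).toReal

/-- One-step predictive probability `μ(a | x)`. -/
noncomputable def condP {A : Type*} [MeasurableSpace A] (μ : Measure (ℕ → A)) (x : List A)
    (a : A) : ℝ :=
  mass μ (x ++ [a]) / mass μ x

/-- Squared Hellinger distance between the one-step predictive distributions given `x`. -/
noncomputable def hellSq {A : Type*} [MeasurableSpace A] (μ ξ : Measure (ℕ → A))
    (x : List A) : ℝ :=
  ∑' a : A, (Real.sqrt (condP μ x a) - Real.sqrt (condP ξ x a)) ^ 2

/-- KL divergence between the one-step predictive distributions given `x`. -/
noncomputable def klDiv' {A : Type*} [MeasurableSpace A] (μ ξ : Measure (ℕ → A))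
    (x : List A) : ℝ :=
  ∑' a : A, condP μ x a * Real.log (condP μ x a / condP ξ x a)

/-- The prefix `ω_{<t+1}` of length `t` of an infinite sequence. -/
def pre {A : Type*} (ω : ℕ → A) (t : ℕ) : List A := (List.range t).map ω


section Construction
open Classical

lemma mem_cyl_pre {A : Type*} (σ ω : ℕ → A) (t : ℕ) :
    σ ∈ cyl (pre ω t) ↔ ∀ i < t, σ i = ω i := by
  constructor
  · intro h i hi
    have := h ⟨i, by simpa [pre] using hi⟩
    simpa [pre, List.get_eq_getElem] using this
  · intro h i
    have hi : (i : ℕ) < t := by have := i.2; simpa [pre] using this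
    rw [List.get_eq_getElem, h i hi]; simp [pre]

lemma mem_cyl_append {A : Type*} (σ : ℕ → A) (x : List A) (a : A) :
    σ ∈ cyl (x ++ [a]) ↔ σ ∈ cyl x ∧ σ x.length = a := by
  constructor
  · intro h
    constructor
    · intro i
      have := h ⟨i, by simp⟩
      simpa [List.get_eq_getElem, List.getElem_append_left i.2] using this
    · have := h ⟨x.length, by simp⟩
      simpa [List.get_eq_getElem] using this
  · rintro ⟨h1, h2⟩ i
    rcases lt_or_ge (i : ℕ) x.length with hi | hi
    · have := h1 ⟨i, hi⟩
      simpa [List.get_eq_getElem, List.getElem_append_left hi] using this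
    · have hieq : (i : ℕ) = x.length := by have := i.2; simp at this; omega
      simp [List.get_eq_getElem, hieq, h2]

lemma pre_succ {A : Type*} (ω : ℕ → A) (t : ℕ) : pre ω (t + 1) = pre ω t ++ [ω t] := by
  simp [pre, List.range_succ]

lemma pre_length {A : Type*} (ω : ℕ → A) (t : ℕ) : (pre ω t).length = t := by simp [pre]

lemma cyl_measurable (x : List Bool) : MeasurableSet (cyl x) := by
  have : cyl x = ⋂ i : Fin x.length, (fun ω : ℕ → Bool => ω i) ⁻¹' {x.get i} := by
    ext σ; simp [cyl, Set.mem_iInter]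
  rw [this]
  exact MeasurableSet.iInter fun i => (measurable_pi_apply _) (measurableSet_singleton _)

noncomputable section
def omg (k : ℕ) : ℕ → Bool := fun i => decide (i ≠ k)
def allT : ℕ → Bool := fun _ => true

def myMu : Measure (ℕ → Bool) :=
  Measure.sum (fun k => ((2 : ℝ≥0∞)⁻¹ ^ (k + 1)) • Measure.dirac (omg k))
def myNu : Measure (ℕ → Bool) := Measure.dirac allT

lemma myMu_apply {S : Set (ℕ → Bool)} (hS : MeasurableSet S) :
    myMu S = ∑' k, if omg k ∈ S then (2 : ℝ≥0∞)⁻¹ ^ (k + 1) else 0 := by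
  rw [myMu, Measure.sum_apply _ hS]
  refine tsum_congr fun k => ?_
  rw [Measure.smul_apply, Measure.dirac_apply' _ hS, smul_eq_mul, Set.indicator_apply]
  split_ifs <;> simp

lemma tail_geo (t : ℕ) :
    (∑' k : ℕ, if t ≤ k then (2 : ℝ≥0∞)⁻¹ ^ (k + 1) else 0) = (2 : ℝ≥0∞)⁻¹ ^ t := by
  induction t with
  | zero =>
      simp only [Nat.zero_le, if_true, pow_zero]
      rw [show (fun k : ℕ => (2 : ℝ≥0∞)⁻¹ ^ (k + 1)) = fun k => 2⁻¹ * 2⁻¹ ^ k from by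
        funext k; ring, ENNReal.tsum_mul_left, ENNReal.tsum_geometric]
      rw [show (1 : ℝ≥0∞) - 2⁻¹ = 2⁻¹ from by
        rw [ENNReal.sub_eq_of_eq_add (by simp)]; rw [ENNReal.inv_two_add_inv_two]]
      rw [inv_inv, ENNReal.inv_mul_cancel (by simp) (by simp)]
  | succ t ih =>
      have key : ∀ k : ℕ, (if t ≤ k then (2 : ℝ≥0∞)⁻¹ ^ (k + 1) else 0)
          = (if t + 1 ≤ k then (2 : ℝ≥0∞)⁻¹ ^ (k + 1) else 0)
            + (if k = t then (2 : ℝ≥0∞)⁻¹ ^ (t + 1) else 0) := by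
        intro k
        rcases Nat.lt_trichotomy k t with h | h | h
        · rw [if_neg (by omega), if_neg (by omega), if_neg (by omega), add_zero]
        · subst h; rw [if_pos le_rfl, if_neg (by omega), if_pos rfl, zero_add]
        · rw [if_pos (by omega), if_pos (by omega), if_neg (by omega), add_zero]
      have expand : (∑' k : ℕ, if t ≤ k then (2 : ℝ≥0∞)⁻¹ ^ (k + 1) else 0)
          = (∑' k : ℕ, if t + 1 ≤ k then (2 : ℝ≥0∞)⁻¹ ^ (k + 1) else 0)
            + (2 : ℝ≥0∞)⁻¹ ^ (t + 1) := by
        rw [← tsum_ite_eq t (fun _ => (2 : ℝ≥0∞)⁻¹ ^ (t + 1)), ← ENNReal.tsum_add]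
        exact tsum_congr key
      rw [expand] at ih
      have h2 : (2 : ℝ≥0∞)⁻¹ ^ t = (2:ℝ≥0∞)⁻¹ ^ (t+1) + 2⁻¹ ^ (t+1) := by
        rw [← two_mul, pow_succ]
        rw [show (2:ℝ≥0∞) * (2⁻¹ ^ t * 2⁻¹) = 2⁻¹ ^ t * (2 * 2⁻¹) from by ring,
          ENNReal.mul_inv_cancel (by simp) (by simp), mul_one]
      rw [h2] at ih
      exact (ENNReal.add_left_inj (by simp)).mp ih

end


namespace lb

lemma omg_lt {k i : ℕ} (h : i < k) : omg k i = true := by simp [omg]; omega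
lemma omg_self (k : ℕ) : omg k k = false := by simp [omg]
lemma omg_inj : Function.Injective omg := by
  intro j k h
  by_contra hne
  have := congrFun h j
  simp [omg, hne] at this

lemma mem_cyl_pre_omg {j k t : ℕ} (h : k < t) :
    omg j ∈ cyl (pre (omg k) t) ↔ j = k := by
  rw [mem_cyl_pre]
  constructor
  · intro hh
    have := hh k h
    simp [omg] at this
    omega
  · rintro rfl i _; rfl

lemma pre_ones {ω : ℕ → Bool} {t : ℕ} (h : ∀ i < t, ω i = true) :
    pre ω t = pre allT t := by
  simp only [pre]
  refine List.map_congr_left fun i hi => ?_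
  rw [List.mem_range] at hi
  rw [h i hi]; rfl

lemma singleton_measurable (σ : ℕ → Bool) : MeasurableSet {σ} := by
  have : {σ} = ⋂ i, (fun ω : ℕ → Bool => ω i) ⁻¹' {σ i} := by
    ext τ
    simp [funext_iff]
  rw [this]
  exact MeasurableSet.iInter fun i => (measurable_pi_apply _) (measurableSet_singleton _)

/-- μ of cylinder of ones -/
lemma muE_ones {ω : ℕ → Bool} {t : ℕ} (h : ∀ i < t, ω i = true) :
    myMu (cyl (pre ω t)) = (2 : ℝ≥0∞)⁻¹ ^ t := by
  rw [myMu_apply (cyl_measurable _), ← tail_geo t]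
  refine tsum_congr fun k => ?_
  congr 1
  rw [mem_cyl_pre, eq_iff_iff]
  constructor
  · intro hh
    by_contra hlt
    have := hh k (by omega)
    rw [h k (by omega), omg_self] at this
    simp at this
  · intro hk i hi
    rw [omg_lt (by omega), h i hi]

lemma muE_ones_false {ω : ℕ → Bool} {t : ℕ} (h : ∀ i < t, ω i = true) :
    myMu (cyl (pre ω t ++ [false])) = (2 : ℝ≥0∞)⁻¹ ^ (t + 1) := by
  rw [myMu_apply (cyl_measurable _)]
  rw [show ((2:ℝ≥0∞)⁻¹ ^ (t+1)) = ∑' k : ℕ, if k = t then (2:ℝ≥0∞)⁻¹ ^ (k+1) else 0 from by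
    rw [show (fun k : ℕ => if k = t then (2:ℝ≥0∞)⁻¹ ^ (k+1) else 0)
        = fun k => if k = t then (2:ℝ≥0∞)⁻¹ ^ (t+1) else 0 from by
      funext k; split_ifs with hh <;> simp [hh]]
    rw [tsum_ite_eq]]
  refine tsum_congr fun k => ?_
  congr 1
  rw [mem_cyl_append, mem_cyl_pre, pre_length, eq_iff_iff]
  constructor
  · rintro ⟨h1, h2⟩
    by_contra hne
    rcases Nat.lt_or_ge k t with hlt | hge
    · have := h1 k hlt
      rw [h k hlt, omg_self] at this
      simp at this
    · have : omg k t = true := omg_lt (by omega)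
      rw [h2] at this
      simp at this
  · rintro rfl
    exact ⟨fun i hi => by rw [omg_lt hi, h i hi], omg_self _⟩

lemma muE_omg_tail {k t : ℕ} (h : k < t) :
    myMu (cyl (pre (omg k) t)) = (2 : ℝ≥0∞)⁻¹ ^ (k + 1) := by
  rw [myMu_apply (cyl_measurable _)]
  rw [show (fun j : ℕ => if omg j ∈ cyl (pre (omg k) t) then (2:ℝ≥0∞)⁻¹ ^ (j+1) else 0)
      = fun j => if j = k then (2:ℝ≥0∞)⁻¹ ^ (k+1) else 0 from by
    funext j; rw [mem_cyl_pre_omg h]; split_ifs with hh <;> simp [hh]]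
  rw [tsum_ite_eq]

lemma muE_omg_tail_false {k t : ℕ} (h : k < t) :
    myMu (cyl (pre (omg k) t ++ [false])) = 0 := by
  rw [myMu_apply (cyl_measurable _)]
  convert tsum_zero with j
  rw [if_neg]
  rw [mem_cyl_append, pre_length, mem_cyl_pre_omg h]
  rintro ⟨rfl, h2⟩
  simp [omg] at h2
  omega

lemma nuE_ones {ω : ℕ → Bool} {t : ℕ} (h : ∀ i < t, ω i = true) :
    myNu (cyl (pre ω t)) = 1 := by
  rw [myNu, Measure.dirac_apply' _ (cyl_measurable _), Set.indicator_of_mem]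
  · rfl
  · rw [mem_cyl_pre]
    intro i hi
    rw [h i hi]; rfl

lemma nuE_ones_false {ω : ℕ → Bool} {t : ℕ} (h : ∀ i < t, ω i = true) :
    myNu (cyl (pre ω t ++ [false])) = 0 := by
  rw [myNu, Measure.dirac_apply' _ (cyl_measurable _), Set.indicator_of_notMem]
  rw [mem_cyl_append]
  rintro ⟨_, h2⟩
  exact Bool.true_eq_false.mp h2

lemma nuE_omg_tail {k t : ℕ} (h : k < t) :
    myNu (cyl (pre (omg k) t)) = 0 := by
  rw [myNu, Measure.dirac_apply' _ (cyl_measurable _), Set.indicator_of_notMem]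
  rw [mem_cyl_pre]
  intro hh
  have := hh k h
  rw [omg_self] at this
  simp [allT] at this

lemma nuE_omg_tail' {k t : ℕ} (h : k < t) (a : Bool) :
    myNu (cyl (pre (omg k) t ++ [a])) = 0 := by
  rw [myNu, Measure.dirac_apply' _ (cyl_measurable _), Set.indicator_of_notMem]
  rw [mem_cyl_append, mem_cyl_pre]
  rintro ⟨hh, _⟩
  have := hh k h
  rw [omg_self] at this
  simp [allT] at this

instance : IsProbabilityMeasure myMu := by
  constructor
  rw [myMu_apply MeasurableSet.univ]
  simpa using tail_geo 0

instance : IsProbabilityMeasure myNu := by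
  rw [myNu]; infer_instance


lemma allT_true (i : ℕ) : allT i = true := rfl
lemma omg_gt {k t : ℕ} (h : k < t) : omg k t = true := by simp [omg]; omega

noncomputable def xi (w : ℝ) : Measure (ℕ → Bool) :=
  ENNReal.ofReal w • myMu + ENNReal.ofReal (1 - w) • myNu

lemma toReal_halfpow (t : ℕ) : ((2 : ℝ≥0∞)⁻¹ ^ t).toReal = (2 : ℝ)⁻¹ ^ t := by
  rw [ENNReal.toReal_pow, ENNReal.toReal_inv]
  norm_num

lemma mass_xi (w : ℝ) (hw0 : 0 ≤ w) (hw1 : w ≤ 1) (x : List Bool) :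
    mass (xi w) x = w * mass myMu x + (1 - w) * mass myNu x := by
  simp only [mass, xi]
  rw [Measure.add_apply, Measure.smul_apply, Measure.smul_apply, smul_eq_mul, smul_eq_mul,
    ENNReal.toReal_add (by finiteness) (by finiteness), ENNReal.toReal_mul, ENNReal.toReal_mul,
    ENNReal.toReal_ofReal hw0, ENNReal.toReal_ofReal (by linarith)]

lemma pre_ones_true {ω : ℕ → Bool} {t : ℕ} (h : ∀ i < t, ω i = true) :
    pre ω t ++ [true] = pre allT (t + 1) := by
  rw [pre_succ, pre_ones h, allT_true]

lemma tsum_bool' (f : Bool → ℝ) : ∑' a : Bool, f a = f true + f false := by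
  rw [tsum_fintype, Fintype.sum_bool]

noncomputable def BB (t : ℕ) (w : ℝ) : ℝ := w * 2⁻¹ ^ (t + 1) + (1 - w)
noncomputable def CC (t : ℕ) (w : ℝ) : ℝ := w * 2⁻¹ ^ (t + 1)

lemma BB_pos {t : ℕ} {w : ℝ} (hw0 : 0 < w) (hw1 : w < 1) : 0 < BB t w := by
  have : (0:ℝ) < 2⁻¹ ^ (t+1) := by positivity
  unfold BB; nlinarith
lemma CC_pos {t : ℕ} {w : ℝ} (hw0 : 0 < w) : 0 < CC t w := by
  unfold CC; positivity

/-- the KL divergence at an all-ones prefix -/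
lemma klDiv_eval {w : ℝ} (hw0 : 0 < w) (hw1 : w < 1) {ω : ℕ → Bool} {t : ℕ}
    (h : ∀ i < t, ω i = true) :
    klDiv' myMu (xi w) (pre ω t) =
      2⁻¹ * Real.log ((BB t w + CC t w) / (2 * BB t w)) +
      2⁻¹ * Real.log ((BB t w + CC t w) / (2 * CC t w)) := by
  have hB := BB_pos (t := t) hw0 hw1
  have hC := CC_pos (t := t) hw0
  have hmt : mass myMu (pre ω t) = 2⁻¹ ^ t := by
    rw [mass, muE_ones h, toReal_halfpow]
  have hmtT : mass myMu (pre ω t ++ [true]) = 2⁻¹ ^ (t + 1) := by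
    rw [mass, pre_ones_true h, muE_ones (fun i _ => allT_true i), toReal_halfpow]
  have hmtF : mass myMu (pre ω t ++ [false]) = 2⁻¹ ^ (t + 1) := by
    rw [mass, muE_ones_false h, toReal_halfpow]
  have hnt : mass myNu (pre ω t) = 1 := by
    rw [mass, nuE_ones h]; simp
  have hntT : mass myNu (pre ω t ++ [true]) = 1 := by
    rw [mass, pre_ones_true h, nuE_ones (fun i _ => allT_true i)]; simp
  have hntF : mass myNu (pre ω t ++ [false]) = 0 := by
    rw [mass, nuE_ones_false h]; simp
  have hp : (0:ℝ) < 2⁻¹ ^ t := by positivity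
  have hxt : mass (xi w) (pre ω t) = BB t w + CC t w := by
    rw [mass_xi w hw0.le hw1.le, hmt, hnt, BB, CC]; ring_nf
  have hxtT : mass (xi w) (pre ω t ++ [true]) = BB t w := by
    rw [mass_xi w hw0.le hw1.le, hmtT, hntT, BB]; ring
  have hxtF : mass (xi w) (pre ω t ++ [false]) = CC t w := by
    rw [mass_xi w hw0.le hw1.le, hmtF, hntF, CC]; ring
  have hcT : condP myMu (pre ω t) true = 2⁻¹ := by
    rw [condP, hmtT, hmt, pow_succ]; field_simp
  have hcF : condP myMu (pre ω t) false = 2⁻¹ := by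
    rw [condP, hmtF, hmt, pow_succ]; field_simp
  rw [klDiv', tsum_bool', hcT, hcF, condP, condP, hxt, hxtT, hxtF]
  have e1 : (2⁻¹ : ℝ) / (BB t w / (BB t w + CC t w)) = (BB t w + CC t w) / (2 * BB t w) := by
    field_simp
  have e2 : (2⁻¹ : ℝ) / (CC t w / (BB t w + CC t w)) = (BB t w + CC t w) / (2 * CC t w) := by
    field_simp
  rw [e1, e2]


lemma log_pair_nonneg {B C : ℝ} (hB : 0 < B) (hC : 0 < C) :
    0 ≤ 2⁻¹ * Real.log ((B + C) / (2 * B)) + 2⁻¹ * Real.log ((B + C) / (2 * C)) := by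
  have hx : (0:ℝ) < (B + C) / (2 * B) := by positivity
  have hy : (0:ℝ) < (B + C) / (2 * C) := by positivity
  have hcomb : 2⁻¹ * Real.log ((B + C) / (2 * B)) + 2⁻¹ * Real.log ((B + C) / (2 * C))
      = 2⁻¹ * Real.log ((B + C) / (2 * B) * ((B + C) / (2 * C))) := by
    rw [Real.log_mul hx.ne' hy.ne']; ring
  rw [hcomb]
  have h1 : (1:ℝ) ≤ (B + C) / (2 * B) * ((B + C) / (2 * C)) := by
    rw [div_mul_div_comm, le_div_iff₀ (by positivity)]
    nlinarith [sq_nonneg (B - C)]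
  have := Real.log_nonneg h1
  positivity

/-- strict per-step lower bound at all-ones prefixes -/
lemma step_lb {w : ℝ} (hw0 : 0 < w) (hw1 : w < 1) {ω : ℕ → Bool} {t : ℕ}
    (h : ∀ i < t, ω i = true) :
    2⁻¹ * (Real.log ((1 - w) / w) + t * Real.log 2) - 2⁻¹ * Real.log 2 <
      klDiv' myMu (xi w) (pre ω t) := by
  rw [klDiv_eval hw0 hw1 h]
  have hB := BB_pos (t := t) hw0 hw1
  have hC := CC_pos (t := t) hw0
  set B := BB t w; set C := CC t w
  have hr : (0:ℝ) < (1 - w) / w := div_pos (by linarith) hw0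
  -- part 1 : -log 2 ≤ log ((B+C)/(2B))
  have p1 : -Real.log 2 ≤ Real.log ((B + C) / (2 * B)) := by
    rw [← Real.log_inv]
    rw [Real.log_le_log_iff (by norm_num) (by positivity)]
    rw [le_div_iff₀ (by positivity)]
    linarith
  -- part 2 : log(r 2^t) < log ((B+C)/(2C))
  have key : (B + C) / (2 * C) = 1 + (1 - w) / w * 2 ^ t := by
    have h2t : (2:ℝ)⁻¹ ^ (t+1) = (2 ^ (t+1))⁻¹ := by rw [inv_pow]
    simp only [BB, CC, B, C, h2t]
    rw [div_eq_iff (by positivity)]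
    field_simp
    ring
  have p2 : Real.log ((1 - w) / w) + t * Real.log 2 < Real.log ((B + C) / (2 * C)) := by
    rw [key]
    have : Real.log ((1 - w) / w * 2 ^ t) = Real.log ((1 - w) / w) + t * Real.log 2 := by
      rw [Real.log_mul hr.ne' (by positivity), Real.log_pow]
    rw [← this]
    apply Real.log_lt_log (by positivity)
    linarith [show (0:ℝ) < (1-w)/w * 2^t by positivity]
  nlinarith [p1, p2]

/-- vanishing of KL beyond the support of `omg k` -/
lemma klDiv_zero {w : ℝ} (hw0 : 0 < w) (hw1 : w < 1) {k t : ℕ} (h : k < t) :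
    klDiv' myMu (xi w) (pre (omg k) t) = 0 := by
  have hq : ((2:ℝ≥0∞)⁻¹ ^ (k+1)).toReal = (2:ℝ)⁻¹ ^ (k+1) := toReal_halfpow _
  have hq0 : (0:ℝ) < 2⁻¹ ^ (k+1) := by positivity
  have hm : mass myMu (pre (omg k) t) = 2⁻¹ ^ (k+1) := by rw [mass, muE_omg_tail h, hq]
  have hmT : mass myMu (pre (omg k) t ++ [true]) = 2⁻¹ ^ (k+1) := by
    have : pre (omg k) t ++ [true] = pre (omg k) (t+1) := by
      rw [pre_succ, omg_gt h]
    rw [mass, this, muE_omg_tail (by omega), hq]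
  have hmF : mass myMu (pre (omg k) t ++ [false]) = 0 := by
    rw [mass, muE_omg_tail_false h]; simp
  have hn0 : mass myNu (pre (omg k) t) = 0 := by rw [mass, nuE_omg_tail h]; simp
  have hnT : mass myNu (pre (omg k) t ++ [true]) = 0 := by rw [mass, nuE_omg_tail' h]; simp
  have hnF : mass myNu (pre (omg k) t ++ [false]) = 0 := by rw [mass, nuE_omg_tail' h]; simp
  have hx : mass (xi w) (pre (omg k) t) = w * 2⁻¹ ^ (k+1) := by
    rw [mass_xi w hw0.le hw1.le, hm, hn0]; ring
  have hxT : mass (xi w) (pre (omg k) t ++ [true]) = w * 2⁻¹ ^ (k+1) := by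
    rw [mass_xi w hw0.le hw1.le, hmT, hnT]; ring
  have hxF : mass (xi w) (pre (omg k) t ++ [false]) = 0 := by
    rw [mass_xi w hw0.le hw1.le, hmF, hnF]; ring
  rw [klDiv', tsum_bool']
  simp only [condP]
  rw [hm, hmT, hmF, hx, hxT, hxF]
  rw [div_self hq0.ne', div_self (by positivity), zero_div, zero_mul]
  simp

/-- nonnegativity of each step at all-ones prefixes -/
lemma step_nonneg {w : ℝ} (hw0 : 0 < w) (hw1 : w < 1) {ω : ℕ → Bool} {t : ℕ}
    (h : ∀ i < t, ω i = true) : 0 ≤ klDiv' myMu (xi w) (pre ω t) := by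
  rw [klDiv_eval hw0 hw1 h]
  exact log_pair_nonneg (BB_pos hw0 hw1) (CC_pos hw0)

lemma sum_eval {w : ℝ} (hw0 : 0 < w) (hw1 : w < 1) (k : ℕ) :
    ∑' t, klDiv' myMu (xi w) (pre (omg k) t)
      = ∑ t ∈ Finset.range (k+1), klDiv' myMu (xi w) (pre (omg k) t) :=
  tsum_eq_sum (fun b hb => klDiv_zero hw0 hw1 (by simpa using Finset.mem_range.not.mp hb))

lemma gauss (N : ℕ) : (∑ i ∈ Finset.range N, (i:ℝ)) * 2 = N * (N - 1) := by
  induction N with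
  | zero => simp
  | succ N ih =>
      rw [Finset.sum_range_succ, add_mul, ih]
      push_cast
      ring

lemma mu_singleton (k : ℕ) : myMu {omg k} = (2:ℝ≥0∞)⁻¹ ^ (k+1) := by
  rw [myMu_apply (singleton_measurable _)]
  rw [← tsum_ite_eq k (fun _ => (2:ℝ≥0∞)⁻¹ ^ (k+1))]
  refine tsum_congr fun j => ?_
  by_cases hh : j = k
  · subst hh; simp
  · rw [if_neg (by simpa [Set.mem_singleton_iff] using fun hc => hh (omg_inj hc)), if_neg hh]

lemma mu_union (n : ℕ) : myMu (⋃ j : ℕ, {omg (n+j)}) = (2:ℝ≥0∞)⁻¹ ^ n := by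
  rw [measure_iUnion]
  · rw [show (fun j : ℕ => myMu {omg (n+j)}) = fun j => (2:ℝ≥0∞)⁻¹ ^ n * 2⁻¹ ^ (j+1) from by
      funext j; rw [mu_singleton, ← pow_add, Nat.add_assoc]]
    rw [ENNReal.tsum_mul_left, show (∑' j : ℕ, (2:ℝ≥0∞)⁻¹ ^ (j+1)) = 1 from by
      simpa using tail_geo 0, mul_one]
  · intro i j hij
    simp only [Set.disjoint_singleton]
    exact fun hh => hij (by have := omg_inj hh; omega)
  · exact fun j => singleton_measurable _


end lb

end Construction

open lb

/-- Lower bound construction: there is a two-element model class `{μ, ν}` over the binary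
alphabet with prior weights `(w, 1-w)` such that with `μ`-probability at least `δ`,
`D_∞ > (1/(4 ln 2)) ln(1/δ) (ln(1/δ) + 2 ln((1-w)/w) - 3 ln 2)`. -/
theorem stmt10 (δ w : ℝ) (hδ : δ ∈ Set.Ioo (0 : ℝ) 1) (hw : w ∈ Set.Ioo (0 : ℝ) 1) :
    ∃ μ ν : Measure (ℕ → Bool), IsProbabilityMeasure μ ∧ IsProbabilityMeasure ν ∧
      ENNReal.ofReal δ ≤
        μ {ω | (1 / (4 * Real.log 2)) * Real.log (1 / δ) *
            (Real.log (1 / δ) + 2 * Real.log ((1 - w) / w) - 3 * Real.log 2) <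
          ∑' t, klDiv' μ (ENNReal.ofReal w • μ + ENNReal.ofReal (1 - w) • ν) (pre ω t)} := by
  obtain ⟨hδ0, hδ1⟩ := hδ
  obtain ⟨hw0, hw1⟩ := hw
  refine ⟨myMu, myNu, inferInstance, inferInstance, ?_⟩
  have hxi : (ENNReal.ofReal w • myMu + ENNReal.ofReal (1 - w) • myNu) = xi w := rfl
  rw [hxi]
  set ρ := Real.log ((1 - w) / w) with hρdef
  set c := Real.log 2 with hcdef
  have hc0 : 0 < c := Real.log_pos (by norm_num)
  set L := Real.log (1 / δ) with hLdef
  have hL0 : 0 < L := Real.log_pos (by rw [lt_div_iff₀ hδ0]; linarith)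
  set n := ⌊L / c⌋₊ with hndef
  have hn1 : (n : ℝ) * c ≤ L := by
    have h := Nat.floor_le (le_of_lt (div_pos hL0 hc0))
    calc (n : ℝ) * c ≤ (L / c) * c := mul_le_mul_of_nonneg_right h hc0.le
      _ = L := by field_simp
  have hn2 : L < ((n : ℝ) + 1) * c := by
    have h := Nat.lt_floor_add_one (L / c)
    calc L = (L / c) * c := by field_simp
      _ < ((n : ℝ) + 1) * c := by
          apply mul_lt_mul_of_pos_right _ hc0
          exact_mod_cast h
  have hsub : (⋃ j : ℕ, {omg (n + j)}) ⊆
      {ω : ℕ → Bool | (1 / (4 * c)) * L * (L + 2 * ρ - 3 * c) <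
        ∑' t, klDiv' myMu (xi w) (pre ω t)} := by
    intro σ hσ
    simp only [Set.mem_iUnion, Set.mem_singleton_iff] at hσ
    obtain ⟨j, rfl⟩ := hσ
    set k := n + j with hkdef
    simp only [Set.mem_setOf_eq]
    rw [sum_eval hw0 hw1 k]
    have hones : ∀ t, t ≤ k → ∀ i < t, omg k i = true :=
      fun t ht i hi => omg_lt (by omega)
    rcases lt_or_ge ((1 / (4 * c)) * L * (L + 2 * ρ - 3 * c)) 0 with hB | hB
    · exact lt_of_lt_of_le hB (Finset.sum_nonneg fun t ht =>
        step_nonneg hw0 hw1 (hones t (by simpa [Nat.lt_succ_iff] using ht)))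
    · have h1 : ∑ t ∈ Finset.range (n + 1), (2⁻¹ * (ρ + (t : ℝ) * c) - 2⁻¹ * c) <
          ∑ t ∈ Finset.range (n + 1), klDiv' myMu (xi w) (pre (omg k) t) := by
        apply Finset.sum_lt_sum_of_nonempty Finset.nonempty_range_add_one
        intro t ht
        exact step_lb hw0 hw1 (hones t (by simp [Nat.lt_succ_iff] at ht; omega))
      have h2 : ∑ t ∈ Finset.range (n + 1), klDiv' myMu (xi w) (pre (omg k) t) ≤
          ∑ t ∈ Finset.range (k + 1), klDiv' myMu (xi w) (pre (omg k) t) := by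
        apply Finset.sum_le_sum_of_subset_of_nonneg (Finset.range_subset_range.mpr (by omega))
        intro t ht _
        exact step_nonneg hw0 hw1 (hones t (by simpa [Nat.lt_succ_iff] using ht))
      have h3 : ∑ t ∈ Finset.range (n + 1), (2⁻¹ * (ρ + (t : ℝ) * c) - 2⁻¹ * c)
          = ((n : ℝ) + 1) * 2⁻¹ * (ρ - c) + 2⁻¹ * c * (((n : ℝ) + 1) * n / 2) := by
        have h3a : ∑ t ∈ Finset.range (n + 1), (2⁻¹ * (ρ + (t : ℝ) * c) - 2⁻¹ * c)
            = ∑ t ∈ Finset.range (n + 1), (2⁻¹ * (ρ - c) + 2⁻¹ * c * (t : ℝ)) :=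
          Finset.sum_congr rfl (fun t _ => by ring)
        rw [h3a, Finset.sum_add_distrib, Finset.sum_const, Finset.card_range, ← Finset.mul_sum]
        simp only [nsmul_eq_mul]
        have hg := gauss (n + 1)
        push_cast at hg ⊢
        nlinarith [hg]
      have hρpos : 0 ≤ L + 2 * ρ - 3 * c := by
        by_contra hcon
        push_neg at hcon
        have hneg : (1 / (4 * c)) * L * (L + 2 * ρ - 3 * c) < 0 :=
          mul_neg_of_pos_of_neg (by positivity) hcon
        linarith
      have hfinal : (1 / (4 * c)) * L * (L + 2 * ρ - 3 * c) ≤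
          ((n : ℝ) + 1) * 2⁻¹ * (ρ - c) + 2⁻¹ * c * (((n : ℝ) + 1) * n / 2) := by
        rw [show (1 / (4 * c)) * L * (L + 2 * ρ - 3 * c)
          = (L * (L + 2 * ρ - 3 * c)) / (4 * c) from by ring,
          div_le_iff₀ (by positivity)]
        have key1 : 0 ≤ (((n : ℝ) + 1) * c - L) * (L + 2 * ρ - 3 * c) :=
          mul_nonneg (by linarith) hρpos
        have key2 : 0 ≤ (((n : ℝ) + 1) * c - L) * (((n : ℝ) + 1) * c) :=
          mul_nonneg (by linarith) (by positivity)
        nlinarith [key1, key2]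
      linarith [h1, h2, h3.symm.le, hfinal]
  calc ENNReal.ofReal δ ≤ (2 : ℝ≥0∞)⁻¹ ^ n := by
        rw [show ((2 : ℝ≥0∞)⁻¹ ^ n) = ENNReal.ofReal ((2 : ℝ)⁻¹ ^ n) from by
          rw [ENNReal.ofReal_pow (by norm_num), ENNReal.ofReal_inv_of_pos (by norm_num)]
          norm_num]
        apply ENNReal.ofReal_le_ofReal
        have hlog : Real.log δ ≤ Real.log ((2 : ℝ)⁻¹ ^ n) := by
          rw [Real.log_pow, Real.log_inv]
          have : L = -Real.log δ := by rw [hLdef, one_div, Real.log_inv]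
          push_cast
          linarith
        exact (Real.log_le_log_iff hδ0 (by positivity)).mp hlog
    _ = myMu (⋃ j : ℕ, {omg (n + j)}) := (mu_union n).symm
    _ ≤ _ := measure_mono hsub
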